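/- arXiv:2001.00435 — 2 statements merged into one kernel-verified Lean document; each statement's English description precedes it below -/
import Mathlib

section
/- For matrices A ∈ ℂ^{n×n} and B ∈ ℂ^{r×r}, the spectrum of Y = A ⊗ I_r + I_n ⊗ B is exactly {λ_A + λ_B : λ_A ∈ spectrum(A), λ_B ∈ spectrum(B)}. -/
open Matrix Kronecker Polynomial

section Helpers

variable {m : Type*} [Fintype m] [DecidableEq m]

private lemma spec_iff (M : Matrix m m ℂ) (z : ℂ) :
    z ∈ spectrum ℂ M ↔ ∃ v : m → ℂ, v ≠ 0 ∧ M.mulVec v = z • v := by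
  rw [spectrum.mem_iff, Algebra.algebraMap_eq_smul_one,
    Matrix.isUnit_iff_isUnit_det, isUnit_iff_ne_zero, not_not,
    ← Matrix.exists_mulVec_eq_zero_iff]
  constructor
  · rintro ⟨v, hv, h⟩
    refine ⟨v, hv, ?_⟩
    rw [Matrix.sub_mulVec, Matrix.smul_mulVec, Matrix.one_mulVec, sub_eq_zero] at h
    rw [← h]
  · rintro ⟨v, hv, h⟩
    refine ⟨v, hv, ?_⟩
    rw [Matrix.sub_mulVec, Matrix.smul_mulVec, Matrix.one_mulVec, h, sub_self]

private lemma charmatrix_map_eval (M : Matrix m m ℂ) (z : ℂ) :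
    (charmatrix M).map (eval z) = z • (1 : Matrix m m ℂ) - M := by
  ext i j
  by_cases h : i = j <;>
    simp [h, charmatrix_apply, Matrix.one_apply, Matrix.diagonal_apply]

private lemma eval_charpoly' (M : Matrix m m ℂ) (z : ℂ) :
    (Matrix.charpoly M).eval z = (z • (1 : Matrix m m ℂ) - M).det := by
  rw [Matrix.charpoly, ← charmatrix_map_eval M z]
  have := RingHom.map_det (evalRingHom z) (charmatrix M)
  simpa using this

private lemma root_mem_spectrum (M : Matrix m m ℂ) (z : ℂ)
    (h : (Matrix.charpoly M).eval z = 0) : z ∈ spectrum ℂ M := by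
  rw [spectrum.mem_iff, Algebra.algebraMap_eq_smul_one, Matrix.isUnit_iff_isUnit_det,
    isUnit_iff_ne_zero, not_not, ← eval_charpoly' M z]
  exact h

private lemma spectrum_transpose (M : Matrix m m ℂ) : spectrum ℂ Mᵀ = spectrum ℂ M := by
  ext z
  simp only [spectrum.mem_iff, Algebra.algebraMap_eq_smul_one, Matrix.isUnit_iff_isUnit_det]
  rw [show z • (1 : Matrix m m ℂ) - Mᵀ = (z • 1 - M)ᵀ by simp, Matrix.det_transpose]

private lemma pow_intertwine {R : Type*} [CommRing R] {k : Type*} [Fintype k] [DecidableEq k]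
    {X : Matrix m m R} {D : Matrix k k R} {V : Matrix m k R}
    (h : X * V = V * D) : ∀ j : ℕ, X ^ j * V = V * D ^ j := by
  intro j
  induction j with
  | zero => simp
  | succ j ih =>
    rw [pow_succ, pow_succ, Matrix.mul_assoc, h, ← Matrix.mul_assoc, ih, Matrix.mul_assoc]

private lemma aeval_intertwine {R : Type*} [CommRing R] {k : Type*} [Fintype k] [DecidableEq k]
    {X : Matrix m m R} {D : Matrix k k R} {V : Matrix m k R}
    (h : X * V = V * D) (p : R[X]) : (aeval X p) * V = V * (aeval D p) := by
  rw [aeval_eq_sum_range, aeval_eq_sum_range]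
  simp only [Matrix.sum_mul, Matrix.mul_sum, Matrix.smul_mul, Matrix.mul_smul]
  exact Finset.sum_congr rfl fun j _ => by rw [pow_intertwine h]

private lemma multiset_prod_isUnit {R : Type*} [CommMonoid R] (s : Multiset R)
    (hc : ∀ a ∈ s, IsUnit a) : IsUnit s.prod := by
  induction s using Multiset.induction with
  | empty => simp
  | cons a s ih =>
    rw [Multiset.prod_cons]
    exact (hc a (Multiset.mem_cons_self a s)).mul
      (ih fun b hb => hc b (Multiset.mem_cons_of_mem hb))

private lemma list_prod_isUnit {R : Type*} [Monoid R] :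
    ∀ (s : List R), (∀ a ∈ s, IsUnit a) → IsUnit s.prod
  | [], _ => by simp
  | a :: s, hc => by
    rw [List.prod_cons]
    exact (hc a (List.mem_cons_self)).mul
      (list_prod_isUnit s fun b hb => hc b (List.mem_cons_of_mem a hb))

private lemma list_prod_not_isUnit {R : Type*} [Monoid R] {s : List R}
    (h : ¬ IsUnit s.prod) : ∃ a ∈ s, ¬ IsUnit a := by
  by_contra hc
  push_neg at hc
  exact h (list_prod_isUnit s hc)

private lemma mulVec_kron_sum {n r : ℕ} (A : Matrix (Fin n) (Fin n) ℂ)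
    (B : Matrix (Fin r) (Fin r) ℂ) (v : Fin n × Fin r → ℂ) (i : Fin n) (k : Fin r) :
    ((A ⊗ₖ (1 : Matrix (Fin r) (Fin r) ℂ) + (1 : Matrix (Fin n) (Fin n) ℂ) ⊗ₖ B).mulVec v) (i, k)
      = (∑ j, A i j * v (j, k)) + ∑ l, B k l * v (i, l) := by
  simp [Matrix.mulVec, dotProduct, Fintype.sum_prod_type, Matrix.one_apply,
    add_mul, Finset.sum_add_distrib, mul_ite, ite_mul, mul_comm]

end Helpers

/-- Kronecker sum spectrum: the spectrum of `A ⊗ I_r + I_n ⊗ B` is exactly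
the set of sums of an eigenvalue of `A` and an eigenvalue of `B`. -/
theorem stmt_0 (n r : ℕ) (A : Matrix (Fin n) (Fin n) ℂ) (B : Matrix (Fin r) (Fin r) ℂ) :
    spectrum ℂ (A ⊗ₖ (1 : Matrix (Fin r) (Fin r) ℂ) + (1 : Matrix (Fin n) (Fin n) ℂ) ⊗ₖ B)
      = {z : ℂ | ∃ a ∈ spectrum ℂ A, ∃ b ∈ spectrum ℂ B, z = a + b} := by
  ext z
  simp only [Set.mem_setOf_eq]
  constructor
  · intro hz
    rw [spec_iff] at hz
    obtain ⟨v, hv, h⟩ := hz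
    set V : Matrix (Fin n) (Fin r) ℂ := Matrix.of fun i k => v (i, k) with hVdef
    have hV : V ≠ 0 := by
      intro h0
      apply hv
      funext p
      have := congrFun (congrFun h0 p.1) p.2
      simpa [hVdef] using this
    have hsyl : A * V + V * Bᵀ = z • V := by
      ext i k
      have h1 := congrFun h (i, k)
      rw [mulVec_kron_sum] at h1
      simpa [Matrix.mul_apply, Matrix.add_apply, hVdef, mul_comm] using h1
    have hAV : A * V = V * (z • (1 : Matrix (Fin r) (Fin r) ℂ) - Bᵀ) := by
      rw [Matrix.mul_sub, Matrix.mul_smul, Matrix.mul_one, ← hsyl, add_sub_cancel_right]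
    set D : Matrix (Fin r) (Fin r) ℂ := z • 1 - Bᵀ with hDdef
    have hCH : (aeval A (Matrix.charpoly A)) * V = V * aeval D (Matrix.charpoly A) :=
      aeval_intertwine hAV _
    rw [Matrix.aeval_self_charpoly, Matrix.zero_mul] at hCH
    have hnotunit : ¬ IsUnit (aeval D (Matrix.charpoly A)) := by
      rintro ⟨u, hu⟩
      apply hV
      calc V = V * ((u : Matrix (Fin r) (Fin r) ℂ) * (↑u⁻¹ : Matrix (Fin r) (Fin r) ℂ)) := by
              rw [u.mul_inv, Matrix.mul_one]
        _ = (V * (u : Matrix (Fin r) (Fin r) ℂ)) * (↑u⁻¹ : Matrix (Fin r) (Fin r) ℂ) := by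
              rw [Matrix.mul_assoc]
        _ = 0 := by rw [hu, ← hCH, Matrix.zero_mul]
    have hsp : (Matrix.charpoly A).Splits := IsAlgClosed.splits _
    have hfact : Matrix.charpoly A
        = ((Matrix.charpoly A).roots.toList.map (fun a => X - Polynomial.C a)).prod := by
      have h0 : Matrix.charpoly A
          = ((Matrix.charpoly A).roots.map (fun a => X - Polynomial.C a)).prod :=
        hsp.eq_prod_roots_of_monic (Matrix.charpoly_monic A)
      conv_lhs => rw [h0, ← Multiset.coe_toList (Matrix.charpoly A).roots, Multiset.map_coe,
        Multiset.prod_coe]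
    rw [hfact, map_list_prod, List.map_map] at hnotunit
    obtain ⟨w, hw, hwu⟩ := list_prod_not_isUnit hnotunit
    rw [List.mem_map] at hw
    obtain ⟨a, ha, rfl⟩ := hw
    rw [Multiset.mem_toList] at ha
    have hwform : aeval D (X - Polynomial.C a) = (z - a) • (1 : Matrix (Fin r) (Fin r) ℂ) - Bᵀ := by
      simp only [map_sub, aeval_X, aeval_C, Algebra.algebraMap_eq_smul_one, hDdef, sub_smul]
      abel
    have hb : (z - a) ∈ spectrum ℂ Bᵀ := by
      rw [spectrum.mem_iff, Algebra.algebraMap_eq_smul_one]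
      rw [Function.comp_apply, hwform] at hwu
      exact hwu
    have haA : a ∈ spectrum ℂ A :=
      root_mem_spectrum A a (Polynomial.isRoot_of_mem_roots ha)
    exact ⟨a, haA, z - a, (spectrum_transpose B) ▸ hb, by ring⟩
  · rintro ⟨a, ha, b, hb, rfl⟩
    rw [spec_iff] at ha hb ⊢
    obtain ⟨v, hv, hva⟩ := ha
    obtain ⟨w, hw, hwb⟩ := hb
    obtain ⟨i₀, hi₀⟩ := Function.ne_iff.mp hv
    obtain ⟨k₀, hk₀⟩ := Function.ne_iff.mp hw
    refine ⟨fun p => v p.1 * w p.2, ?_, ?_⟩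
    · intro h0
      have := congrFun h0 (i₀, k₀)
      simp only [Pi.zero_apply] at this
      exact (mul_ne_zero hi₀ hk₀) this
    · funext p
      obtain ⟨i, k⟩ := p
      rw [mulVec_kron_sum]
      have h1 : (∑ j, A i j * (v j * w k)) = (a * v i) * w k := by
        simp_rw [← mul_assoc]
        rw [← Finset.sum_mul]
        congr 1
        have := congrFun hva i
        simpa [Matrix.mulVec, dotProduct] using this
      have h2 : (∑ l, B k l * (v i * w l)) = v i * (b * w k) := by
        rw [show (∑ l, B k l * (v i * w l)) = v i * ∑ l, B k l * w l by
          rw [Finset.mul_sum]; exact Finset.sum_congr rfl fun l _ => by ring]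
        congr 1
        have := congrFun hwb k
        simpa [Matrix.mulVec, dotProduct] using this
      rw [h1, h2]
      simp only [Pi.smul_apply, smul_eq_mul]
      ring
end

section
/- Let A ∈ ℝ^{n×n}, γ ∈ ℝ with P symmetric positive definite solving AᵀP + PA − 2γP = −I_n, and set γ̃ = −1/λ_max(P) + 2γ. Then every solution x(t) of ẋ = Ax satisfies x(t)ᵀP x(t) ≤ e^{γ̃(t−t₀)} x(t₀)ᵀP x(t₀) for all t ≥ t₀. -/
open Matrix

theorem quad_bound_aux (n : ℕ) (P : Matrix (Fin n) (Fin n) ℝ) (hP : P.PosDef)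
    (v : EuclideanSpace ℝ (Fin n)) :
    (inner ℝ v (Matrix.toEuclideanLin P v) : ℝ) ≤ (⨆ i, hP.1.eigenvalues i) * ‖v‖ ^ 2 := by
  classical
  set b := hP.1.eigenvectorBasis with hb
  have hTb : ∀ j, Matrix.toEuclideanLin P (b j) = hP.1.eigenvalues j • b j := by
    intro j
    have := hP.1.mulVec_eigenvectorBasis j
    ext i
    have := congrFun this i
    simpa [Matrix.toEuclideanLin_apply] using this
  have hsym := Matrix.isHermitian_iff_isSymmetric.1 hP.1
  have hexp : ∀ (w : EuclideanSpace ℝ (Fin n)),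
      (inner ℝ v w : ℝ) = ∑ i, b.repr v i * (inner ℝ (b i) w : ℝ) := by
    intro w
    conv_lhs => rw [← b.sum_repr v]
    rw [sum_inner]
    simp [real_inner_smul_left, Finset.mul_sum, mul_assoc]
  have h1 : (inner ℝ v (Matrix.toEuclideanLin P v) : ℝ)
      = ∑ i, hP.1.eigenvalues i * (b.repr v i) ^ 2 := by
    rw [hexp]
    refine Finset.sum_congr rfl fun i _ => ?_
    have : (inner ℝ (b i) (Matrix.toEuclideanLin P v) : ℝ)
        = (inner ℝ (Matrix.toEuclideanLin P (b i)) v : ℝ) := (hsym _ _).symm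
    rw [this, hTb, real_inner_smul_left, b.repr_apply_apply]
    ring
  have h2 : ‖v‖ ^ 2 = ∑ i, (b.repr v i) ^ 2 := by
    rw [← real_inner_self_eq_norm_sq, hexp]
    refine Finset.sum_congr rfl fun i _ => ?_
    rw [b.repr_apply_apply]; ring
  rw [h1, h2, Finset.mul_sum]
  refine Finset.sum_le_sum fun i _ => ?_
  have hle : hP.1.eigenvalues i ≤ ⨆ j, hP.1.eigenvalues j :=
    le_ciSup (Set.Finite.bddAbove (Set.finite_range _)) i
  nlinarith [sq_nonneg (b.repr v i)]

theorem inner_sum_eq_aux (n : ℕ) (A P : Matrix (Fin n) (Fin n) ℝ) (γ : ℝ)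
    (hLyap : Aᵀ * P + P * A - (2 * γ) • P = -(1 : Matrix (Fin n) (Fin n) ℝ))
    (v : EuclideanSpace ℝ (Fin n)) :
    (inner ℝ v (Matrix.toEuclideanLin P (Matrix.toEuclideanLin A v)) : ℝ)
      + (inner ℝ (Matrix.toEuclideanLin A v) (Matrix.toEuclideanLin P v) : ℝ)
    = -‖v‖ ^ 2 + 2 * γ * (inner ℝ v (Matrix.toEuclideanLin P v) : ℝ) := by
  classical
  have hM : Aᵀ * P + P * A = (2 * γ) • P - 1 := by
    linear_combination (norm := module) hLyap
  set a : Fin n → ℝ := (WithLp.equiv 2 (Fin n → ℝ)) v with ha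
  have key : ∀ u w : EuclideanSpace ℝ (Fin n),
      (inner ℝ u w : ℝ) = (WithLp.equiv 2 (Fin n → ℝ) u) ⬝ᵥ (WithLp.equiv 2 (Fin n → ℝ) w) := by
    intro u w
    simp [PiLp.inner_apply, dotProduct, mul_comm]
  have hnorm : ‖v‖ ^ 2 = a ⬝ᵥ a := by
    rw [← real_inner_self_eq_norm_sq, key]
  rw [key, key, key, hnorm]
  change a ⬝ᵥ (P *ᵥ (A *ᵥ a)) + (A *ᵥ a) ⬝ᵥ (P *ᵥ a) = -(a ⬝ᵥ a) + 2 * γ * a ⬝ᵥ (P *ᵥ a)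
  have e1 : a ⬝ᵥ (P *ᵥ (A *ᵥ a)) + (A *ᵥ a) ⬝ᵥ (P *ᵥ a)
      = a ⬝ᵥ ((Aᵀ * P + P * A) *ᵥ a) := by
    have h2 : (A *ᵥ a) ⬝ᵥ (P *ᵥ a) = a ⬝ᵥ ((Aᵀ * P) *ᵥ a) := by
      rw [← Matrix.mulVec_mulVec, Matrix.dotProduct_mulVec a Aᵀ, Matrix.vecMul_transpose]
    rw [Matrix.mulVec_mulVec, Matrix.add_mulVec, dotProduct_add, h2]
    ring
  rw [e1, hM, Matrix.sub_mulVec, dotProduct_sub, Matrix.smul_mulVec,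
    dotProduct_smul, Matrix.one_mulVec]
  simp [smul_eq_mul]
  ring

/-- Integrated Lyapunov decay: `x(t)ᵀPx(t) ≤ e^{γ̃(t−t₀)} x(t₀)ᵀPx(t₀)` with
`γ̃ = −1/λ_max(P) + 2γ`, for any solution of `ẋ = Ax`. -/
theorem stmt_8 (n : ℕ) (A P : Matrix (Fin n) (Fin n) ℝ) (γ : ℝ) (hP : P.PosDef)
    (hLyap : Aᵀ * P + P * A - (2 * γ) • P = -(1 : Matrix (Fin n) (Fin n) ℝ))
    (x : ℝ → EuclideanSpace ℝ (Fin n))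
    (hx : ∀ t, HasDerivAt x (Matrix.toEuclideanLin A (x t)) t)
    (t₀ t : ℝ) (ht : t₀ ≤ t) :
    (inner ℝ (x t) (Matrix.toEuclideanLin P (x t)) : ℝ) ≤
      Real.exp ((-1 / (⨆ i, hP.1.eigenvalues i) + 2 * γ) * (t - t₀)) *
        (inner ℝ (x t₀) (Matrix.toEuclideanLin P (x t₀)) : ℝ) := by
  rcases Nat.eq_zero_or_pos n with hn | hn
  · subst hn
    have h0 : ∀ s : ℝ, x s = 0 := fun s => Subsingleton.elim _ _
    simp [h0]
  -- notation
  set lam := (⨆ i, hP.1.eigenvalues i) with hlam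
  set c := -1 / lam + 2 * γ with hc
  set V : ℝ → ℝ := fun s => (inner ℝ (x s) (Matrix.toEuclideanLin P (x s)) : ℝ) with hV
  -- lam > 0
  have hlampos : 0 < lam := by
    have i0 : Fin n := ⟨0, hn⟩
    have h1 : hP.1.eigenvalues i0 ≤ lam :=
      le_ciSup (Set.Finite.bddAbove (Set.finite_range _)) i0
    exact lt_of_lt_of_le (hP.eigenvalues_pos i0) h1
  -- derivative of V
  set V' : ℝ → ℝ := fun s =>
    (inner ℝ (x s) (Matrix.toEuclideanLin P (Matrix.toEuclideanLin A (x s))) : ℝ)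
      + (inner ℝ (Matrix.toEuclideanLin A (x s)) (Matrix.toEuclideanLin P (x s)) : ℝ) with hV'
  have hVderiv : ∀ s, HasDerivAt V (V' s) s := by
    intro s
    have hPx : HasDerivAt (fun u => Matrix.toEuclideanLin P (x u))
        (Matrix.toEuclideanLin P (Matrix.toEuclideanLin A (x s))) s := by
      have := ((Matrix.toEuclideanLin P).toContinuousLinearMap.hasFDerivAt
        (x := x s)).comp_hasDerivAt s (hx s)
      exact this
    exact HasDerivAt.inner ℝ (hx s) hPx
  -- differential inequality
  have hVineq : ∀ s, V' s ≤ c * V s := by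
    intro s
    have heq := inner_sum_eq_aux n A P γ hLyap (x s)
    have hq := quad_bound_aux n P hP (x s)
    have : V s / lam ≤ ‖x s‖ ^ 2 := by
      rw [div_le_iff₀ hlampos]
      calc V s ≤ lam * ‖x s‖ ^ 2 := hq
        _ = ‖x s‖ ^ 2 * lam := by ring
    have h2 : V' s = -‖x s‖ ^ 2 + 2 * γ * V s := heq
    rw [h2, hc]
    have : -‖x s‖ ^ 2 ≤ -(V s / lam) := by linarith
    calc -‖x s‖ ^ 2 + 2 * γ * V s ≤ -(V s / lam) + 2 * γ * V s := by linarith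
      _ = (-1 / lam + 2 * γ) * V s := by field_simp
  -- Gronwall via monotonicity
  set g : ℝ → ℝ := fun s => Real.exp (-c * s) * V s with hg
  have hgderiv : ∀ s, HasDerivAt g (Real.exp (-c * s) * (V' s - c * V s)) s := by
    intro s
    have he : HasDerivAt (fun u : ℝ => Real.exp (-c * u)) (Real.exp (-c * s) * (-c)) s := by
      have : HasDerivAt (fun u : ℝ => -c * u) (-c) s := by
        simpa using (hasDerivAt_id s).const_mul (-c)
      exact this.exp
    have := he.mul (hVderiv s)
    exact this.congr_deriv (by ring)
  have hanti : Antitone g :=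
    antitone_of_hasDerivAt_nonpos hgderiv (fun s => by
      have h1 : V' s - c * V s ≤ 0 := by linarith [hVineq s]
      have h2 : (0:ℝ) < Real.exp (-c * s) := Real.exp_pos _
      exact mul_nonpos_of_nonneg_of_nonpos h2.le h1)
  have hgle : g t ≤ g t₀ := hanti ht
  have hfinal : V t ≤ Real.exp (c * (t - t₀)) * V t₀ := by
    have h3 : Real.exp (-c * t) * V t ≤ Real.exp (-c * t₀) * V t₀ := hgle
    have h4 : (0:ℝ) < Real.exp (c * t) := Real.exp_pos _
    have := mul_le_mul_of_nonneg_left h3 h4.le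
    calc V t = Real.exp (c * t) * (Real.exp (-c * t) * V t) := by
          rw [← mul_assoc, ← Real.exp_add]; simp
      _ ≤ Real.exp (c * t) * (Real.exp (-c * t₀) * V t₀) := this
      _ = Real.exp (c * (t - t₀)) * V t₀ := by
          rw [← mul_assoc, ← Real.exp_add]; ring_nf
  exact hfinal
end
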